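/- Define the complete elliptic integrals K(ζ) = ∫_{θ=0}^{π/2} 1/√(1 − ζ²·sin²(θ)) dθ and E(ζ) = ∫_{θ=0}^{π/2} √(1 − ζ²·sin²(θ)) dθ. Let κ and τ be real numbers with 0 < κ, 2κ < τ, and τ < 2π. Then ∫_{ρ=τ/2−κ}^{τ/2} sin(τ−κ−ρ)·sin(κ)·sin(ρ) / √(sin²(κ)·sin²(ρ) − [cos(κ)·cos(ρ) − cos(τ−κ−ρ)]²) dρ = sin(κ) · [E(sin(κ/2)) − cos²((τ−κ)/2)·K(sin(κ/2))] / √(cos²(κ/2) − cos²((τ−κ)/2)). -/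

import Mathlib

open Real

/-- Complete elliptic integral of the first kind. -/
noncomputable def ellipticK (ζ : ℝ) : ℝ :=
  ∫ θ in (0:ℝ)..(π / 2), 1 / Real.sqrt (1 - ζ ^ 2 * Real.sin θ ^ 2)

/-- Complete elliptic integral of the second kind. -/
noncomputable def ellipticE (ζ : ℝ) : ℝ :=
  ∫ θ in (0:ℝ)..(π / 2), Real.sqrt (1 - ζ ^ 2 * Real.sin θ ^ 2)


section AuxPerimeter
open Set MeasureTheory

lemma aux_sin_mul (A x : ℝ) : sin (A + x) * sin (A - x) = sin A ^ 2 - sin x ^ 2 := by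
  rw [Real.sin_add, Real.sin_sub]
  nlinarith [sin_sq_add_cos_sq A, sin_sq_add_cos_sq x]

lemma aux_D (κ τ : ℝ) : sin (τ/2) * sin (τ/2 - κ) = cos (κ/2)^2 - cos ((τ-κ)/2)^2 := by
  have h := Real.cos_sub_cos κ (τ - κ)
  rw [show (κ + (τ - κ))/2 = τ/2 by ring, show (κ - (τ - κ))/2 = -(τ/2 - κ) by ring,
    Real.sin_neg] at h
  have h1 := Real.cos_sq (κ/2)
  have h2 := Real.cos_sq ((τ-κ)/2)
  rw [show 2 * (κ/2) = κ by ring] at h1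
  rw [show 2 * ((τ-κ)/2) = τ - κ by ring] at h2
  nlinarith [h, h1, h2]

lemma key_arg (κ τ ρ : ℝ) :
    sin κ^2 * sin ρ^2 - (cos κ * cos ρ - cos (τ-κ-ρ))^2
    = 4 * (sin (κ/2)^2 - sin (ρ - (τ/2-κ/2))^2) * (cos (κ/2)^2 - cos ((τ-κ)/2)^2) := by
  have h1 : sin κ^2 * sin ρ^2 - (cos κ * cos ρ - cos (τ-κ-ρ))^2
      = (cos (τ-κ-ρ) - cos (κ+ρ)) * (cos (κ-ρ) - cos (τ-κ-ρ)) := by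
    rw [Real.cos_add κ ρ, Real.cos_sub κ ρ]; ring
  have h2 : cos (τ-κ-ρ) - cos (κ+ρ) = 2 * sin (τ/2) * sin (κ/2 + (ρ - (τ/2-κ/2))) := by
    rw [Real.cos_sub_cos, show (τ-κ-ρ + (κ+ρ))/2 = τ/2 by ring,
      show (τ-κ-ρ - (κ+ρ))/2 = -(κ/2 + (ρ - (τ/2-κ/2))) by ring, Real.sin_neg]
    ring
  have h3 : cos (κ-ρ) - cos (τ-κ-ρ) = 2 * sin (τ/2 - κ) * sin (κ/2 - (ρ - (τ/2-κ/2))) := by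
    rw [Real.cos_sub_cos, show (κ-ρ + (τ-κ-ρ))/2 = κ/2 - (ρ - (τ/2-κ/2)) by ring,
      show (κ-ρ - (τ-κ-ρ))/2 = -(τ/2 - κ) by ring, Real.sin_neg]
    ring
  rw [h1, h2, h3]
  have h4 := aux_D κ τ
  have h5 := aux_sin_mul (κ/2) (ρ - (τ/2-κ/2))
  nlinarith [h4, h5]

lemma aux_num (κ τ ρ : ℝ) :
    sin (τ-κ-ρ) * sin ρ = sin ((τ-κ)/2)^2 - sin (ρ - (τ/2-κ/2))^2 := by
  have := aux_sin_mul ((τ-κ)/2) (ρ - (τ/2-κ/2))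
  rw [show (τ-κ)/2 + (ρ - (τ/2-κ/2)) = ρ by ring,
    show (τ-κ)/2 - (ρ - (τ/2-κ/2)) = τ-κ-ρ by ring] at this
  rw [← this]; ring

section pieces
variable {k : ℝ} (hk0 : 0 < k) (hk1 : k < 1)

-- half-circle integrals reduce to elliptic integrals
lemma half_circle_E (hk0 : 0 < k) (hk1 : k < 1) :
    (∫ θ in (0:ℝ)..π, Real.sqrt (1 - k ^ 2 * Real.cos θ ^ 2)) = 2 * ellipticE k := by
  have hcont : Continuous fun θ : ℝ => Real.sqrt (1 - k ^ 2 * Real.cos θ ^ 2) := by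
    fun_prop
  have h1 : (∫ θ in (0:ℝ)..π, Real.sqrt (1 - k ^ 2 * Real.cos θ ^ 2))
      = (∫ θ in (0:ℝ)..(π/2), Real.sqrt (1 - k ^ 2 * Real.cos θ ^ 2))
        + ∫ θ in (π/2:ℝ)..π, Real.sqrt (1 - k ^ 2 * Real.cos θ ^ 2) := by
    rw [intervalIntegral.integral_add_adjacent_intervals] <;>
      exact hcont.intervalIntegrable _ _
  have h2 : (∫ θ in (π/2:ℝ)..π, Real.sqrt (1 - k ^ 2 * Real.cos θ ^ 2))
      = ∫ θ in (0:ℝ)..(π/2), Real.sqrt (1 - k ^ 2 * Real.cos θ ^ 2) := by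
    have := intervalIntegral.integral_comp_sub_left
      (fun θ => Real.sqrt (1 - k ^ 2 * Real.cos θ ^ 2)) π (a := 0) (b := π/2)
    rw [show π - π/2 = π/2 by ring, sub_zero] at this
    rw [← this]
    congr 1; ext θ; rw [Real.cos_pi_sub]; ring_nf
  have h3 : (∫ θ in (0:ℝ)..(π/2), Real.sqrt (1 - k ^ 2 * Real.cos θ ^ 2)) = ellipticE k := by
    have := intervalIntegral.integral_comp_sub_left
      (fun θ => Real.sqrt (1 - k ^ 2 * Real.cos θ ^ 2)) (π/2) (a := 0) (b := π/2)
    rw [sub_self, sub_zero] at this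
    rw [← this, ellipticE]
    congr 1; ext θ; rw [Real.cos_pi_div_two_sub]
  rw [h1, h2, h3]; ring

lemma half_circle_K (hk0 : 0 < k) (hk1 : k < 1) :
    (∫ θ in (0:ℝ)..π, 1 / Real.sqrt (1 - k ^ 2 * Real.cos θ ^ 2)) = 2 * ellipticK k := by
  have hpos : ∀ θ : ℝ, 0 < 1 - k ^ 2 * Real.cos θ ^ 2 := by
    intro θ
    nlinarith [Real.cos_sq_le_one θ, sq_nonneg k, sq_nonneg (Real.cos θ),
      mul_pos (sub_pos.mpr hk1) (by linarith : (0:ℝ) < 1 + k)]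
  have hcont : Continuous fun θ : ℝ => 1 / Real.sqrt (1 - k ^ 2 * Real.cos θ ^ 2) := by
    apply Continuous.div continuous_const (by fun_prop)
    intro θ
    exact ne_of_gt (Real.sqrt_pos.mpr (hpos θ))
  have h1 : (∫ θ in (0:ℝ)..π, 1 / Real.sqrt (1 - k ^ 2 * Real.cos θ ^ 2))
      = (∫ θ in (0:ℝ)..(π/2), 1 / Real.sqrt (1 - k ^ 2 * Real.cos θ ^ 2))
        + ∫ θ in (π/2:ℝ)..π, 1 / Real.sqrt (1 - k ^ 2 * Real.cos θ ^ 2) := by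
    rw [intervalIntegral.integral_add_adjacent_intervals] <;>
      exact hcont.intervalIntegrable _ _
  have h2 : (∫ θ in (π/2:ℝ)..π, 1 / Real.sqrt (1 - k ^ 2 * Real.cos θ ^ 2))
      = ∫ θ in (0:ℝ)..(π/2), 1 / Real.sqrt (1 - k ^ 2 * Real.cos θ ^ 2) := by
    have := intervalIntegral.integral_comp_sub_left
      (fun θ => 1 / Real.sqrt (1 - k ^ 2 * Real.cos θ ^ 2)) π (a := 0) (b := π/2)
    rw [show π - π/2 = π/2 by ring, sub_zero] at this
    rw [← this]
    congr 1; ext θ; rw [Real.cos_pi_sub]; ring_nf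
  have h3 : (∫ θ in (0:ℝ)..(π/2), 1 / Real.sqrt (1 - k ^ 2 * Real.cos θ ^ 2)) = ellipticK k := by
    have := intervalIntegral.integral_comp_sub_left
      (fun θ => 1 / Real.sqrt (1 - k ^ 2 * Real.cos θ ^ 2)) (π/2) (a := 0) (b := π/2)
    rw [sub_self, sub_zero] at this
    rw [← this, ellipticK]
    congr 1; ext θ; rw [Real.cos_pi_div_two_sub]
  rw [h1, h2, h3]; ring

end pieces


end AuxPerimeter

open Set MeasureTheory in
set_option maxHeartbeats 1000000 in
/-- The conditional perimeter-density integral of a random spherical triangle,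
given one side equal to κ, in terms of complete elliptic integrals
(Jones/Benyon-Tinker). -/
theorem conditional_perimeter_density_elliptic (κ τ : ℝ)
    (hκ : 0 < κ) (hκτ : 2 * κ < τ) (hτ : τ < 2 * π) :
    (∫ ρ in (τ / 2 - κ)..(τ / 2),
      Real.sin (τ - κ - ρ) * Real.sin κ * Real.sin ρ /
        Real.sqrt (Real.sin κ ^ 2 * Real.sin ρ ^ 2 -
          (Real.cos κ * Real.cos ρ - Real.cos (τ - κ - ρ)) ^ 2))
    = Real.sin κ *
        (ellipticE (Real.sin (κ / 2)) -
          Real.cos ((τ - κ) / 2) ^ 2 * ellipticK (Real.sin (κ / 2))) /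
        Real.sqrt (Real.cos (κ / 2) ^ 2 - Real.cos ((τ - κ) / 2) ^ 2) := by
  have hπ : 0 < π := Real.pi_pos
  have hκπ : κ < π := by linarith
  set k : ℝ := Real.sin (κ / 2) with hk_def
  set C : ℝ := Real.cos ((τ - κ) / 2) with hC_def
  have hcosk : 0 < Real.cos (κ / 2) :=
    Real.cos_pos_of_mem_Ioo ⟨by linarith, by linarith⟩
  have hk0 : 0 < k := Real.sin_pos_of_pos_of_lt_pi (by linarith) (by linarith)
  have hk1 : k < 1 := by nlinarith [Real.sin_sq_add_cos_sq (κ / 2)]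
  have hCu : C < Real.cos (κ / 2) := by
    apply Real.cos_lt_cos_of_nonneg_of_le_pi (by linarith) (by linarith) (by linarith)
  have hCl : -Real.cos (κ / 2) < C := by
    have h := Real.cos_lt_cos_of_nonneg_of_le_pi
      (x := (τ - κ) / 2) (y := π - κ / 2) (by linarith) (by linarith) (by linarith)
    rwa [Real.cos_pi_sub] at h
  have hC2 : C ^ 2 < Real.cos (κ / 2) ^ 2 := sq_lt_sq' hCl hCu
  have hD : 0 < Real.cos (κ / 2) ^ 2 - C ^ 2 := by linarith
  set Dv : ℝ := Real.cos (κ / 2) ^ 2 - C ^ 2 with hDv_def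
  have hsqD : 0 < Real.sqrt Dv := Real.sqrt_pos.mpr hD
  set m : ℝ := τ / 2 - κ / 2 with hm_def
  set φ : ℝ → ℝ := fun θ => m + Real.arcsin (k * Real.cos θ) with hφ_def
  set w : ℝ → ℝ :=
    fun θ => 1 / Real.sqrt (1 - (k * Real.cos θ) ^ 2) * (k * -Real.sin θ) with hw_def
  set f : ℝ → ℝ := fun ρ =>
    Real.sin (τ - κ - ρ) * Real.sin κ * Real.sin ρ /
      Real.sqrt (Real.sin κ ^ 2 * Real.sin ρ ^ 2 -
        (Real.cos κ * Real.cos ρ - Real.cos (τ - κ - ρ)) ^ 2) with hf_def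
  set g : ℝ → ℝ := fun θ =>
    Real.sin κ / (2 * Real.sqrt Dv) *
      (Real.sqrt (1 - k ^ 2 * Real.cos θ ^ 2) -
        C ^ 2 * (1 / Real.sqrt (1 - k ^ 2 * Real.cos θ ^ 2))) with hg_def
  have habs : ∀ θ : ℝ, |k * Real.cos θ| ≤ k := by
    intro θ
    rw [abs_mul, abs_of_pos hk0]
    nlinarith [abs_cos_le_one θ, abs_nonneg (Real.cos θ)]
  have hlt : ∀ θ : ℝ, (k * Real.cos θ) ^ 2 < 1 := by
    intro θ
    have h := habs θ
    nlinarith [abs_nonneg (k * Real.cos θ), sq_abs (k * Real.cos θ)]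
  -- derivative
  have hderiv : ∀ θ ∈ Ioo (0 : ℝ) π, HasDerivWithinAt φ (w θ) (Ioo (0 : ℝ) π) θ := by
    intro θ _
    have h1 : k * Real.cos θ ≠ -1 := by
      intro h
      have := habs θ
      rw [h] at this
      simp at this; linarith
    have h2 : k * Real.cos θ ≠ 1 := by
      intro h
      have := habs θ
      rw [h] at this
      simp at this; linarith
    have hinner : HasDerivAt (fun θ : ℝ => k * Real.cos θ) (k * -Real.sin θ) θ :=
      (Real.hasDerivAt_cos θ).const_mul k
    have houter := (Real.hasDerivAt_arcsin h1 h2).comp θ hinner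
    exact ((houter.const_add m)).hasDerivWithinAt
  -- injectivity
  have hinj : InjOn φ (Ioo (0 : ℝ) π) := by
    intro x hx y hy hxy
    have h1 : Real.arcsin (k * Real.cos x) = Real.arcsin (k * Real.cos y) := by
      have := hxy
      simp only [hφ_def] at this
      linarith [this]
    have hmx : k * Real.cos x ∈ Icc (-1 : ℝ) 1 := by
      have := habs x; rw [abs_le] at this
      exact ⟨by linarith, by linarith⟩
    have hmy : k * Real.cos y ∈ Icc (-1 : ℝ) 1 := by
      have := habs y; rw [abs_le] at this
      exact ⟨by linarith, by linarith⟩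
    have h2 := Real.injOn_arcsin hmx hmy h1
    have h3 : Real.cos x = Real.cos y := mul_left_cancel₀ hk0.ne' h2
    exact Real.injOn_cos ⟨hx.1.le, hx.2.le⟩ ⟨hy.1.le, hy.2.le⟩ h3
  -- image
  have harck : Real.arcsin k = κ / 2 := by
    rw [hk_def]
    exact Real.arcsin_sin (by linarith) (by linarith)
  have himg : φ '' Ioo (0 : ℝ) π = Ioo (τ / 2 - κ) (τ / 2) := by
    ext y
    constructor
    · rintro ⟨θ, hθ, rfl⟩
      have hct1 : Real.cos θ < 1 := by
        have h := Real.cos_lt_cos_of_nonneg_of_le_pi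
          (x := 0) (y := θ) le_rfl hθ.2.le hθ.1
        rwa [Real.cos_zero] at h
      have hct2 : -1 < Real.cos θ := by
        have h := Real.cos_lt_cos_of_nonneg_of_le_pi
          (x := θ) (y := π) hθ.1.le le_rfl hθ.2
        rwa [Real.cos_pi] at h
      have hmem : k * Real.cos θ ∈ Icc (-1 : ℝ) 1 := by
        have := habs θ; rw [abs_le] at this
        exact ⟨by linarith, by linarith⟩
      have hkmem : k ∈ Icc (-1 : ℝ) 1 := ⟨by linarith, hk1.le⟩
      have hnkmem : -k ∈ Icc (-1 : ℝ) 1 := ⟨by linarith, by linarith⟩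
      have hA1 : Real.arcsin (k * Real.cos θ) < κ / 2 := by
        have := Real.strictMonoOn_arcsin hmem hkmem (by nlinarith)
        rwa [harck] at this
      have hA2 : -(κ / 2) < Real.arcsin (k * Real.cos θ) := by
        have := Real.strictMonoOn_arcsin hnkmem hmem (by nlinarith)
        rwa [Real.arcsin_neg, harck] at this
      constructor
      · simp only [hφ_def, hm_def]; linarith
      · simp only [hφ_def, hm_def]; linarith
    · intro hy
      have hym1 : -(κ / 2) < y - m := by
        simp only [hm_def]; cases hy; linarith
      have hym2 : y - m < κ / 2 := by
        simp only [hm_def]; cases hy; linarith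
      have hs1 : Real.sin (y - m) < k := by
        rw [hk_def]
        exact Real.sin_lt_sin_of_lt_of_le_pi_div_two (by linarith) (by linarith) hym2
      have hs2 : -k < Real.sin (y - m) := by
        have h := Real.sin_lt_sin_of_lt_of_le_pi_div_two
          (x := -(κ / 2)) (y := y - m) (by linarith) (by linarith) hym1
        rwa [Real.sin_neg, ← hk_def] at h
      set t : ℝ := Real.sin (y - m) / k with ht_def
      have ht1 : t < 1 := (div_lt_one hk0).mpr hs1
      have ht2 : -1 < t := by
        rw [ht_def, lt_div_iff₀ hk0]; linarith
      have hkt : k * t = Real.sin (y - m) := by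
        rw [ht_def]; field_simp
      refine ⟨Real.arccos t, ⟨Real.arccos_pos.mpr ht1, ?_⟩, ?_⟩
      · have h := Real.neg_pi_div_two_lt_arcsin.mpr ht2
        rw [Real.arccos]; linarith
      · simp only [hφ_def]
        rw [Real.cos_arccos ht2.le ht1.le, hkt,
          Real.arcsin_sin (by linarith) (by linarith)]
        ring
  -- pointwise identity on the θ side
  have hpt : ∀ θ ∈ Ioo (0 : ℝ) π, |w θ| • f (φ θ) = g θ := by
    intro θ hθ
    have hs : 0 < Real.sin θ := Real.sin_pos_of_pos_of_lt_pi hθ.1 hθ.2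
    set u : ℝ := k * Real.cos θ with hu_def
    have hu2 : u ^ 2 < 1 := hlt θ
    have h1u : 0 < 1 - u ^ 2 := by linarith
    have habs' := habs θ
    rw [abs_le] at habs'
    have hsin : Real.sin (φ θ - m) = u := by
      simp only [hφ_def, add_sub_cancel_left]
      exact Real.sin_arcsin (by linarith) (by linarith)
    have harg : Real.sin κ ^ 2 * Real.sin (φ θ) ^ 2 -
        (Real.cos κ * Real.cos (φ θ) - Real.cos (τ - κ - φ θ)) ^ 2
        = 4 * (k ^ 2 - u ^ 2) * Dv := by
      rw [key_arg κ τ (φ θ), ← hm_def, hsin, ← hk_def, ← hC_def, ← hDv_def]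
    have hpyth : Real.sin ((τ - κ) / 2) ^ 2 + C ^ 2 = 1 := by
      rw [hC_def]; exact Real.sin_sq_add_cos_sq _
    have hnum : Real.sin (τ - κ - φ θ) * Real.sin κ * Real.sin (φ θ)
        = Real.sin κ * (1 - C ^ 2 - u ^ 2) := by
      have h := aux_num κ τ (φ θ)
      rw [← hm_def, hsin] at h
      linear_combination Real.sin κ * h + Real.sin κ * hpyth
    have hksin : k ^ 2 - u ^ 2 = (k * Real.sin θ) ^ 2 := by
      have hp := Real.sin_sq_add_cos_sq θ
      rw [hu_def]
      linear_combination (-(k ^ 2)) * hp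
    have hsqrt : Real.sqrt (4 * (k ^ 2 - u ^ 2) * Dv)
        = 2 * (k * Real.sin θ) * Real.sqrt Dv := by
      rw [hksin, show 4 * (k * Real.sin θ) ^ 2 * Dv = (2 * (k * Real.sin θ)) ^ 2 * Dv by ring,
        Real.sqrt_mul (sq_nonneg _), Real.sqrt_sq (by positivity)]
    have hw : |w θ| = k * Real.sin θ / Real.sqrt (1 - u ^ 2) := by
      simp only [hw_def, ← hu_def]
      rw [mul_neg, abs_mul, abs_neg,
        abs_of_nonneg (by positivity : (0:ℝ) ≤ 1 / Real.sqrt (1 - u ^ 2)),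
        abs_of_pos (by positivity : 0 < k * Real.sin θ)]
      ring
    have hueq : 1 - k ^ 2 * Real.cos θ ^ 2 = 1 - u ^ 2 := by rw [hu_def]; ring
    have hq2 : Real.sqrt (1 - u ^ 2) ^ 2 = 1 - u ^ 2 := Real.sq_sqrt h1u.le
    have hq0 : 0 < Real.sqrt (1 - u ^ 2) := Real.sqrt_pos.mpr h1u
    rw [smul_eq_mul]
    simp only [hf_def, hg_def]
    rw [harg, hnum, hsqrt, hw, hueq]
    have hks : 0 < k * Real.sin θ := by positivity
    field_simp
    ring_nf
    linear_combination (-Real.sin κ) * hq2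
  -- main computation
  have hab : τ / 2 - κ ≤ τ / 2 := by linarith
  calc
    (∫ ρ in (τ / 2 - κ)..(τ / 2), f ρ)
        = ∫ ρ in Ioo (τ / 2 - κ) (τ / 2), f ρ := by
          rw [intervalIntegral.integral_of_le hab, integral_Ioc_eq_integral_Ioo]
    _ = ∫ θ in Ioo (0 : ℝ) π, |w θ| • f (φ θ) := by
          rw [← himg]
          exact integral_image_eq_integral_abs_deriv_smul measurableSet_Ioo hderiv hinj f
    _ = ∫ θ in Ioo (0 : ℝ) π, g θ :=
          setIntegral_congr_fun measurableSet_Ioo hpt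
    _ = ∫ θ in (0 : ℝ)..π, g θ := by
          rw [intervalIntegral.integral_of_le hπ.le, integral_Ioc_eq_integral_Ioo]
    _ = Real.sin κ * (ellipticE k - C ^ 2 * ellipticK k) / Real.sqrt Dv := by
          have hpos2 : ∀ θ : ℝ, 0 < 1 - k ^ 2 * Real.cos θ ^ 2 := by
            intro θ
            nlinarith [Real.cos_sq_le_one θ, sq_nonneg k, sq_nonneg (Real.cos θ),
              mul_pos (sub_pos.mpr hk1) (by linarith : (0:ℝ) < 1 + k)]
          have hcont1 : Continuous fun θ : ℝ => Real.sqrt (1 - k ^ 2 * Real.cos θ ^ 2) := by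
            fun_prop
          have hcont2 : Continuous fun θ : ℝ => 1 / Real.sqrt (1 - k ^ 2 * Real.cos θ ^ 2) := by
            apply Continuous.div continuous_const (by fun_prop)
            intro θ
            exact ne_of_gt (Real.sqrt_pos.mpr (hpos2 θ))
          simp only [hg_def]
          rw [intervalIntegral.integral_const_mul,
            intervalIntegral.integral_sub (hcont1.intervalIntegrable _ _)
              ((hcont2.intervalIntegrable (0:ℝ) π).const_mul (C ^ 2)),
            intervalIntegral.integral_const_mul, half_circle_E hk0 hk1,
            half_circle_K hk0 hk1]
          field_simp
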